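/- Potential-theoretic lower bound: Let E ⊂ ℝ^d and suppose there exists a Radon measure μ on ℝ^d with μ(E) = +∞ such that Σ_{n≥0} 2^{ns} I_s(μ|_{S_n}) < +∞, where I_s(ν) = ∬ dν(x)dν(y)/(‖x−y‖^s ∨ 1). Then ν̃^s(E) = +∞ and Dim_H(E) ≥ s. -/

import Mathlib

open Metric Set ENNReal MeasureTheory

noncomputable def shell (X : Type*) [NormedAddCommGroup X] (n : ℕ) : Set X :=
  if n = 0 then Metric.ball 0 1 else Metric.ball 0 ((2:ℝ)^n) \ Metric.ball 0 ((2:ℝ)^(n-1))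

noncomputable def nuT {X : Type*} [NormedAddCommGroup X] (s : ℝ) (n : ℕ) (E : Set X) : ℝ≥0∞ :=
  sInf { t : ℝ≥0∞ | ∃ (m : ℕ) (x : Fin m → X) (r : Fin m → ℝ),
    (∀ i, x i ∈ shell X n) ∧ (∀ i, 1 ≤ r i) ∧
    (E ∩ shell X n ⊆ ⋃ i, Metric.ball (x i) (r i)) ∧
    t = ∑ i, ENNReal.ofReal ((r i / 2^n)^s) }

noncomputable def macroDim {X : Type*} [NormedAddCommGroup X] (E : Set X) : ℝ :=
  sInf { s : ℝ | 0 ≤ s ∧ ∑' n, nuT s n E < ⊤ }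

def IsIntegerPoint {d : ℕ} (x : EuclideanSpace ℝ (Fin d)) : Prop := ∀ j, ∃ z : ℤ, x j = (z : ℝ)

def IsProperCover {d : ℕ} (n : ℕ) (E : Set (EuclideanSpace ℝ (Fin d))) {m : ℕ}
    (x : Fin m → EuclideanSpace ℝ (Fin d)) (r : Fin m → ℕ) : Prop :=
  (∀ i, x i ∈ shell (EuclideanSpace ℝ (Fin d)) n) ∧ (∀ i, IsIntegerPoint (x i)) ∧
  (∀ i, 1 ≤ r i) ∧ (E ∩ shell (EuclideanSpace ℝ (Fin d)) n ⊆ ⋃ i, Metric.ball (x i) ((r i : ℝ)))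

noncomputable def nuP {d : ℕ} (s : ℝ) (n : ℕ) (E : Set (EuclideanSpace ℝ (Fin d))) : ℝ≥0∞ :=
  sInf { t : ℝ≥0∞ | ∃ (m : ℕ) (x : Fin m → EuclideanSpace ℝ (Fin d)) (r : Fin m → ℕ),
    IsProperCover n E x r ∧ t = ∑ i, ENNReal.ofReal (((r i : ℝ) / 2^n)^s) }

/-- The macroscopic `s`-energy of a measure `ν`:
`I_s(ν) = ∬ dν(x) dν(y) / (‖x-y‖^s ∨ 1)`. -/
noncomputable def energy {X : Type*} [NormedAddCommGroup X] [MeasurableSpace X]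
    (s : ℝ) (ν : Measure X) : ℝ≥0∞ :=
  ∫⁻ x, ∫⁻ y, ENNReal.ofReal (1 / max (‖x - y‖ ^ s) 1) ∂ν ∂ν

section helpers

lemma CS_tsum {ι : Type*} [Countable ι] [MeasurableSpace ι] [MeasurableSingletonClass ι]
    (c e : ι → ℝ≥0∞) :
    (∑' i, (c i * e i) ^ (1/2 : ℝ)) ≤ (∑' i, c i) ^ (1/2 : ℝ) * (∑' i, e i) ^ (1/2 : ℝ) := by
  have hpq : Real.HolderConjugate 2 2 := Real.HolderConjugate.two_two
  have h := ENNReal.lintegral_mul_le_Lp_mul_Lq (Measure.count : Measure ι) hpq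
    (f := fun i => c i ^ (1/2 : ℝ)) (g := fun i => e i ^ (1/2 : ℝ))
    (by measurability) (by measurability)
  simp only [Pi.mul_apply, lintegral_count] at h
  have key : ∀ x : ℝ≥0∞, (x ^ (1/2 : ℝ)) ^ (2:ℝ) = x := by
    intro x; rw [← ENNReal.rpow_mul]; norm_num
  calc (∑' i, (c i * e i) ^ (1/2 : ℝ))
      = ∑' i, (c i ^ (1/2:ℝ)) * (e i ^ (1/2:ℝ)) := by
        congr 1; ext i; rw [ENNReal.mul_rpow_of_nonneg _ _ (by norm_num)]
    _ ≤ (∑' i, (c i ^ (1/2:ℝ)) ^ (2:ℝ)) ^ (1/2:ℝ) * (∑' i, (e i ^ (1/2:ℝ)) ^ (2:ℝ)) ^ (1/2:ℝ) := h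
    _ = (∑' i, c i) ^ (1/2 : ℝ) * (∑' i, e i) ^ (1/2 : ℝ) := by simp only [key]

lemma sqrt_mul_self' (x : ℝ≥0∞) : x ^ (1/2:ℝ) * x ^ (1/2:ℝ) = x := by
  rw [← ENNReal.rpow_add_of_nonneg _ _ (by norm_num) (by norm_num)]
  norm_num

lemma rpow_half_mul_self (x : ℝ≥0∞) : (x * x) ^ (1/2:ℝ) = x := by
  rw [← pow_two, ← ENNReal.rpow_natCast x 2, ← ENNReal.rpow_mul]
  norm_num

variable {X : Type*} [NormedAddCommGroup X]

lemma shell_subset_ball (n : ℕ) : shell X n ⊆ Metric.ball 0 ((2:ℝ)^n) := by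
  unfold shell
  split
  · rename_i h; subst h; simp
  · exact diff_subset

lemma norm_lt_of_mem_shell {n : ℕ} {x : X} (hx : x ∈ shell X n) : ‖x‖ < 2^n := by
  have := shell_subset_ball n hx
  rwa [mem_ball_zero_iff] at this

lemma iUnion_shell : (⋃ n, shell X n) = univ := by
  ext x
  simp only [mem_iUnion, mem_univ, iff_true]
  rcases lt_or_ge ‖x‖ 1 with h | h
  · exact ⟨0, by simp [shell, mem_ball_zero_iff, h]⟩
  · have hex : ∃ n : ℕ, ‖x‖ < 2^n := pow_unbounded_of_one_lt ‖x‖ one_lt_two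
    classical
    set n := Nat.find hex with hn
    have hlt : ‖x‖ < 2^n := Nat.find_spec hex
    have hn0 : n ≠ 0 := by
      intro h0
      rw [h0] at hlt
      simp at hlt; linarith
    refine ⟨n, ?_⟩
    have hge : ¬ (‖x‖ < 2^(n-1)) := Nat.find_min hex (by omega)
    simp only [shell, if_neg hn0, mem_diff, mem_ball_zero_iff]
    exact ⟨hlt, hge⟩

lemma nuT_le_of_cover {s : ℝ} {n : ℕ} {E : Set X} {m : ℕ} {x : Fin m → X} {r : Fin m → ℝ}
    (h1 : ∀ i, x i ∈ shell X n) (h2 : ∀ i, 1 ≤ r i)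
    (h3 : E ∩ shell X n ⊆ ⋃ i, Metric.ball (x i) (r i)) :
    nuT s n E ≤ ∑ i, ENNReal.ofReal ((r i / 2^n)^s) :=
  sInf_le ⟨m, x, r, h1, h2, h3, rfl⟩

lemma nuT_lt {s : ℝ} {n : ℕ} {E : Set X} {v : ℝ≥0∞} (h : nuT s n E < v) :
    ∃ (m : ℕ) (x : Fin m → X) (r : Fin m → ℝ),
      (∀ i, x i ∈ shell X n) ∧ (∀ i, 1 ≤ r i) ∧
      (E ∩ shell X n ⊆ ⋃ i, Metric.ball (x i) (r i)) ∧
      (∑ i, ENNReal.ofReal ((r i / 2^n)^s)) < v := by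
  unfold nuT at h
  obtain ⟨u, hu, huv⟩ := sInf_lt_iff.1 h
  obtain ⟨m, x, r, h1, h2, h3, rfl⟩ := hu
  exact ⟨m, x, r, h1, h2, h3, huv⟩

variable [MeasurableSpace X] [OpensMeasurableSpace X]

lemma measurableSet_shell (n : ℕ) : MeasurableSet (shell X n) := by
  unfold shell
  split
  · exact measurableSet_ball
  · exact measurableSet_ball.diff measurableSet_ball

lemma key_energy (s : ℝ) (hs : 0 ≤ s) (μ : Measure X) (E : Set X) (n : ℕ)
    (m : ℕ) (x : Fin m → X) (r : Fin m → ℝ) (hr : ∀ i, 1 ≤ r i)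
    (hcov : E ∩ shell X n ⊆ ⋃ i, Metric.ball (x i) (r i)) :
    μ (E ∩ shell X n) * μ (E ∩ shell X n) ≤
      (∑ i, ENNReal.ofReal ((2 * r i)^s)) * energy s (μ.restrict (shell X n)) := by
  classical
  set S := shell X n with hSdef
  set k : X → X → ℝ≥0∞ := fun a b => ENNReal.ofReal (1 / max (‖a - b‖ ^ s) 1) with hk
  set A : Fin m → Set X := fun i =>
    (Metric.ball (x i) (r i) ∩ S) \ ⋃ j, ⋃ (_ : j < i), Metric.ball (x j) (r j) with hA
  have hAmeas : ∀ i, MeasurableSet (A i) :=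
    fun i => (measurableSet_ball.inter (measurableSet_shell n)).diff
      (MeasurableSet.iUnion fun j => MeasurableSet.iUnion fun _ => measurableSet_ball)
  have hAS : ∀ i, A i ⊆ S := fun i a ha => ha.1.2
  have hAball : ∀ i, A i ⊆ Metric.ball (x i) (r i) := fun i a ha => ha.1.1
  have hdisj : ∀ i j : Fin m, i < j → Disjoint (A i) (A j) := by
    intro i j hij
    rw [Set.disjoint_left]
    intro a hai haj
    exact haj.2 (mem_iUnion.2 ⟨i, mem_iUnion.2 ⟨hij, hai.1.1⟩⟩)
  have hAdisj : Set.PairwiseDisjoint (↑(Finset.univ : Finset (Fin m))) A := by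
    intro i _ j _ hij
    rcases lt_or_gt_of_ne hij with h | h
    · exact hdisj i j h
    · exact (hdisj j i h).symm
  have hcovA : E ∩ S ⊆ ⋃ i, A i := by
    intro a ha
    have h1 := hcov ha
    rw [mem_iUnion] at h1
    have hne : (Finset.univ.filter (fun i => a ∈ Metric.ball (x i) (r i))).Nonempty := by
      obtain ⟨i, hi⟩ := h1
      exact ⟨i, Finset.mem_filter.2 ⟨Finset.mem_univ i, hi⟩⟩
    set i₀ := (Finset.univ.filter (fun i => a ∈ Metric.ball (x i) (r i))).min' hne with hi₀
    have hmem : a ∈ Metric.ball (x i₀) (r i₀) :=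
      (Finset.mem_filter.1 (Finset.min'_mem _ hne)).2
    refine mem_iUnion.2 ⟨i₀, ⟨⟨hmem, ha.2⟩, ?_⟩⟩
    intro hbad
    rw [mem_iUnion] at hbad
    obtain ⟨j, hj⟩ := hbad
    rw [mem_iUnion] at hj
    obtain ⟨hji, hjm⟩ := hj
    have : i₀ ≤ j := Finset.min'_le _ _ (Finset.mem_filter.2 ⟨Finset.mem_univ j, hjm⟩)
    exact absurd (lt_of_le_of_lt this hji) (lt_irrefl i₀)
  set e : Fin m → ℝ≥0∞ := fun i => ∫⁻ a in A i, ∫⁻ b in A i, k a b ∂μ ∂μ with he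
  set c : Fin m → ℝ≥0∞ := fun i => ENNReal.ofReal ((2 * r i)^s) with hc
  have step1 : ∀ i, μ (A i) * μ (A i) ≤ c i * e i := by
    intro i
    set R := (2 * r i)^s with hR
    have hr2 : (1:ℝ) ≤ 2 * r i := by linarith [hr i]
    have hR1 : 1 ≤ R := Real.one_le_rpow hr2 hs
    have hRpos : 0 < R := lt_of_lt_of_le one_pos hR1
    have hkbd : ∀ a ∈ A i, ∀ b ∈ A i, ENNReal.ofReal (1/R) ≤ k a b := by
      intro a ha b hb
      have hda : dist a (x i) < r i := mem_ball.1 (hAball i ha)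
      have hdb : dist b (x i) < r i := mem_ball.1 (hAball i hb)
      have hdab : dist a b < 2 * r i :=
        lt_of_le_of_lt (dist_triangle a (x i) b) (by rw [dist_comm (x i) b]; linarith)
      have hnorm : ‖a - b‖ ^ s ≤ R := by
        rw [hR, ← dist_eq_norm]
        exact Real.rpow_le_rpow dist_nonneg (le_of_lt hdab) hs
      have hmax : max (‖a - b‖ ^ s) 1 ≤ R := max_le hnorm hR1
      have hmaxpos : (0:ℝ) < max (‖a - b‖ ^ s) 1 := lt_of_lt_of_le one_pos (le_max_right _ _)
      exact ENNReal.ofReal_le_ofReal (one_div_le_one_div_of_le hmaxpos hmax)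
    have hlow : ENNReal.ofReal (1/R) * μ (A i) * μ (A i) ≤ e i := by
      have inner : ∀ a ∈ A i,
          ENNReal.ofReal (1/R) * μ (A i) ≤ ∫⁻ b in A i, k a b ∂μ := by
        intro a ha
        rw [← setLIntegral_const (A i) (ENNReal.ofReal (1/R))]
        exact setLIntegral_mono' (hAmeas i) (fun b hb => hkbd a ha b hb)
      calc ENNReal.ofReal (1/R) * μ (A i) * μ (A i)
          = ∫⁻ _ in A i, (ENNReal.ofReal (1/R) * μ (A i)) ∂μ := by
            rw [setLIntegral_const]
        _ ≤ ∫⁻ a in A i, ∫⁻ b in A i, k a b ∂μ ∂μ := setLIntegral_mono' (hAmeas i) inner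
    have hcancel : c i * ENNReal.ofReal (1/R) = 1 := by
      rw [hc, ← ENNReal.ofReal_mul (le_of_lt hRpos)]
      rw [mul_one_div, div_self (ne_of_gt hRpos)]
      simp
    calc μ (A i) * μ (A i) = (c i * ENNReal.ofReal (1/R)) * (μ (A i) * μ (A i)) := by
          rw [hcancel, one_mul]
      _ = c i * (ENNReal.ofReal (1/R) * μ (A i) * μ (A i)) := by ring
      _ ≤ c i * e i := mul_le_mul_right hlow _
  have step2 : (∑ i, e i) ≤ energy s (μ.restrict S) := by
    have henergy : energy s (μ.restrict S) = ∫⁻ a in S, ∫⁻ b in S, k a b ∂μ ∂μ := rfl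
    have h1 : ∀ i, e i ≤ ∫⁻ a in A i, ∫⁻ b in S, k a b ∂μ ∂μ :=
      fun i => lintegral_mono (fun a => lintegral_mono_set (hAS i))
    calc (∑ i, e i) ≤ ∑ i, ∫⁻ a in A i, ∫⁻ b in S, k a b ∂μ ∂μ :=
          Finset.sum_le_sum (fun i _ => h1 i)
      _ = ∫⁻ a in ⋃ i ∈ Finset.univ, A i, ∫⁻ b in S, k a b ∂μ ∂μ :=
          (lintegral_biUnion_finset hAdisj (fun i _ => hAmeas i) _).symm
      _ ≤ ∫⁻ a in S, ∫⁻ b in S, k a b ∂μ ∂μ := by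
          apply lintegral_mono_set
          simp only [Finset.mem_univ, iUnion_true]
          exact iUnion_subset hAS
      _ = energy s (μ.restrict S) := henergy.symm
  have step3 : μ (E ∩ S) ≤ ∑ i, μ (A i) :=
    le_trans (measure_mono hcovA) (measure_iUnion_fintype_le μ A)
  have step4 : ∀ i, μ (A i) ≤ (c i * e i) ^ (1/2:ℝ) := by
    intro i
    calc μ (A i) = (μ (A i) * μ (A i)) ^ (1/2:ℝ) := (rpow_half_mul_self _).symm
      _ ≤ (c i * e i) ^ (1/2:ℝ) := ENNReal.rpow_le_rpow (step1 i) (by norm_num)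
  have step5 : μ (E ∩ S) ≤ (∑ i, c i) ^ (1/2:ℝ) * (energy s (μ.restrict S)) ^ (1/2:ℝ) := by
    have hCS := CS_tsum c e
    rw [tsum_fintype, tsum_fintype, tsum_fintype] at hCS
    calc μ (E ∩ S) ≤ ∑ i, μ (A i) := step3
      _ ≤ ∑ i, (c i * e i) ^ (1/2:ℝ) := Finset.sum_le_sum (fun i _ => step4 i)
      _ ≤ (∑ i, c i) ^ (1/2:ℝ) * (∑ i, e i) ^ (1/2:ℝ) := hCS
      _ ≤ (∑ i, c i) ^ (1/2:ℝ) * (energy s (μ.restrict S)) ^ (1/2:ℝ) :=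
          mul_le_mul_right (ENNReal.rpow_le_rpow step2 (by norm_num)) _
  calc μ (E ∩ S) * μ (E ∩ S)
      ≤ ((∑ i, c i) ^ (1/2:ℝ) * (energy s (μ.restrict S)) ^ (1/2:ℝ)) *
        ((∑ i, c i) ^ (1/2:ℝ) * (energy s (μ.restrict S)) ^ (1/2:ℝ)) :=
        mul_le_mul' step5 step5
    _ = ((∑ i, c i) ^ (1/2:ℝ) * (∑ i, c i) ^ (1/2:ℝ)) *
        ((energy s (μ.restrict S)) ^ (1/2:ℝ) * (energy s (μ.restrict S)) ^ (1/2:ℝ)) := by ring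
    _ = (∑ i, c i) * energy s (μ.restrict S) := by rw [sqrt_mul_self', sqrt_mul_self']

lemma pow2_rpow (n : ℕ) (s : ℝ) :
    (2:ℝ≥0∞) ^ ((n:ℝ) * s) = ENNReal.ofReal (((2:ℝ)^n)^s) := by
  have h1 : ((2:ℝ)^n)^s = (2:ℝ) ^ ((n:ℝ) * s) := by
    rw [Real.rpow_mul (by norm_num), Real.rpow_natCast]
  rw [h1, ← ENNReal.ofReal_rpow_of_pos (by norm_num : (0:ℝ) < 2)]
  norm_num

lemma key_cost (s : ℝ) (hs : 0 ≤ s) (μ : Measure X) (E : Set X) (n : ℕ)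
    (m : ℕ) (x : Fin m → X) (r : Fin m → ℝ) (hr : ∀ i, 1 ≤ r i)
    (hcov : E ∩ shell X n ⊆ ⋃ i, Metric.ball (x i) (r i)) :
    μ (E ∩ shell X n) * μ (E ∩ shell X n) ≤
      (ENNReal.ofReal ((2:ℝ)^s) * (2:ℝ≥0∞)^((n:ℝ)*s) * energy s (μ.restrict (shell X n)))
        * (∑ i, ENNReal.ofReal ((r i / 2^n)^s)) := by
  refine le_trans (key_energy s hs μ E n m x r hr hcov) (le_of_eq ?_)
  have h2n0 : (0:ℝ) < 2^n := by positivity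
  have hterm : ∀ i, ENNReal.ofReal ((2 * r i)^s)
      = ENNReal.ofReal ((2:ℝ)^s) * (ENNReal.ofReal (((2:ℝ)^n)^s)
          * ENNReal.ofReal ((r i / 2^n)^s)) := by
    intro i
    have hri : (0:ℝ) ≤ r i / 2^n := div_nonneg (by linarith [hr i]) h2n0.le
    have hfac : (2:ℝ) * r i = 2 * ((2:ℝ)^n * (r i / 2^n)) := by field_simp
    rw [hfac, Real.mul_rpow (by norm_num) (mul_nonneg h2n0.le hri),
      Real.mul_rpow h2n0.le hri,
      ENNReal.ofReal_mul (Real.rpow_nonneg (by norm_num) s),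
      ENNReal.ofReal_mul (Real.rpow_nonneg h2n0.le s)]
  calc (∑ i, ENNReal.ofReal ((2 * r i)^s)) * energy s (μ.restrict (shell X n))
      = (∑ i, ENNReal.ofReal ((2:ℝ)^s) * (ENNReal.ofReal (((2:ℝ)^n)^s)
          * ENNReal.ofReal ((r i / 2^n)^s))) * energy s (μ.restrict (shell X n)) := by
        congr 1; exact Finset.sum_congr rfl (fun i _ => hterm i)
    _ = (ENNReal.ofReal ((2:ℝ)^s) * (2:ℝ≥0∞)^((n:ℝ)*s)
          * energy s (μ.restrict (shell X n))) * (∑ i, ENNReal.ofReal ((r i / 2^n)^s)) := by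
        rw [pow2_rpow]
        rw [← Finset.mul_sum, ← Finset.mul_sum]
        ring

lemma part1 (E : Set X) (s : ℝ) (hs : 0 ≤ s) (μ : Measure X) (hμE : μ E = ⊤)
    (hI : ∑' n : ℕ, (2:ℝ≥0∞)^((n:ℝ)*s) * energy s (μ.restrict (shell X n)) < ⊤) :
    ∑' n, nuT s n E = ⊤ := by
  by_contra hT
  set I : ℕ → ℝ≥0∞ := fun n => energy s (μ.restrict (shell X n)) with hIdef
  set K : ℕ → ℝ≥0∞ := fun n => ENNReal.ofReal ((2:ℝ)^s) * ((2:ℝ≥0∞)^((n:ℝ)*s) * I n) with hK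
  set t : ℕ → ℝ≥0∞ := fun n => nuT s n E + 2⁻¹^n with ht
  have hTn : ∀ n, nuT s n E ≠ ⊤ := fun n => ne_top_of_le_ne_top hT (ENNReal.le_tsum n)
  have hab : ∀ n, μ (E ∩ shell X n) * μ (E ∩ shell X n) ≤ (K n * t n) := by
    intro n
    have hlt : nuT s n E < t n := ENNReal.lt_add_right (hTn n)
      (by simp)
    obtain ⟨m, x, r, h1, h2, h3, h4⟩ := nuT_lt hlt
    calc μ (E ∩ shell X n) * μ (E ∩ shell X n)
        ≤ (ENNReal.ofReal ((2:ℝ)^s) * (2:ℝ≥0∞)^((n:ℝ)*s) * I n)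
            * (∑ i, ENNReal.ofReal ((r i / 2^n)^s)) := key_cost s hs μ E n m x r h2 h3
      _ ≤ (ENNReal.ofReal ((2:ℝ)^s) * (2:ℝ≥0∞)^((n:ℝ)*s) * I n) * t n :=
          mul_le_mul_right (le_of_lt h4) _
      _ = K n * t n := by rw [hK]; ring_nf
  have ha : ∀ n, μ (E ∩ shell X n) ≤ (K n * t n) ^ (1/2:ℝ) := by
    intro n
    calc μ (E ∩ shell X n) = (μ (E ∩ shell X n) * μ (E ∩ shell X n)) ^ (1/2:ℝ) :=
        (rpow_half_mul_self _).symm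
      _ ≤ (K n * t n) ^ (1/2:ℝ) := ENNReal.rpow_le_rpow (hab n) (by norm_num)
  have hKfin : (∑' n, K n) ≠ ⊤ := by
    rw [hK, ENNReal.tsum_mul_left]
    exact ENNReal.mul_ne_top ENNReal.ofReal_ne_top hI.ne
  have htfin : (∑' n, t n) ≠ ⊤ := by
    rw [ht, ENNReal.tsum_add]
    refine ENNReal.add_ne_top.2 ⟨hT, ?_⟩
    rw [ENNReal.tsum_geometric]
    refine ENNReal.inv_ne_top.2 ?_
    have : (2:ℝ≥0∞)⁻¹ < 1 := ENNReal.inv_lt_one.2 one_lt_two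
    exact (tsub_pos_iff_lt.2 this).ne'
  have hsum : (∑' n, μ (E ∩ shell X n)) ≠ ⊤ := by
    refine ne_top_of_le_ne_top ?_ (ENNReal.tsum_le_tsum ha)
    refine ne_top_of_le_ne_top ?_ (CS_tsum (ι := ℕ) K t)
    exact ENNReal.mul_ne_top
      (ENNReal.rpow_ne_top_of_nonneg (by norm_num) hKfin)
      (ENNReal.rpow_ne_top_of_nonneg (by norm_num) htfin)
  have hEU : E = ⋃ n, E ∩ shell X n := by
    rw [← inter_iUnion, iUnion_shell, inter_univ]
  have : μ E ≤ ∑' n, μ (E ∩ shell X n) := by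
    calc μ E = μ (⋃ n, E ∩ shell X n) := by rw [← hEU]
      _ ≤ ∑' n, μ (E ∩ shell X n) := measure_iUnion_le _
  rw [hμE] at this
  exact hsum (top_le_iff.1 this)

end helpers

section scale

variable {X : Type*} [NormedAddCommGroup X]

lemma nuT_le_scale (s s' : ℝ) (hs' : 0 ≤ s') (hss' : s' ≤ s) (n : ℕ) (E : Set X) :
    nuT s n E ≤ ENNReal.ofReal ((4:ℝ)^(s-s')) * nuT s' n E := by
  set cE := ENNReal.ofReal ((4:ℝ)^(s-s')) with hcE
  have hc0 : cE ≠ 0 :=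
    (ENNReal.ofReal_pos.2 (Real.rpow_pos_of_pos (by norm_num) _)).ne'
  have hcT : cE ≠ ⊤ := ENNReal.ofReal_ne_top
  have h2n0 : (0:ℝ) < 2^n := by positivity
  have hmain : ∀ u ∈ { t : ℝ≥0∞ | ∃ (m : ℕ) (x : Fin m → X) (r : Fin m → ℝ),
      (∀ i, x i ∈ shell X n) ∧ (∀ i, 1 ≤ r i) ∧
      (E ∩ shell X n ⊆ ⋃ i, Metric.ball (x i) (r i)) ∧
      t = ∑ i, ENNReal.ofReal ((r i / 2^n)^s') }, nuT s n E ≤ cE * u := by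
    rintro u ⟨m, x, r, h1, h2, h3, rfl⟩
    set r' : Fin m → ℝ := fun i => min (r i) (2^(n+2)) with hr'
    have h2' : ∀ i, 1 ≤ r' i := fun i =>
      le_min (h2 i) (one_le_pow₀ one_le_two)
    have hpow : (2:ℝ)^(n+2) = 4 * 2^n := by ring
    have h3' : E ∩ shell X n ⊆ ⋃ i, Metric.ball (x i) (r' i) := by
      intro y hy
      obtain ⟨i, hi⟩ := mem_iUnion.1 (h3 hy)
      refine mem_iUnion.2 ⟨i, ?_⟩
      rw [mem_ball] at hi ⊢
      refine lt_min hi ?_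
      have hny : ‖y‖ < 2^n := norm_lt_of_mem_shell hy.2
      have hnx : ‖x i‖ < 2^n := norm_lt_of_mem_shell (h1 i)
      calc dist y (x i) = ‖y - x i‖ := dist_eq_norm y (x i)
        _ ≤ ‖y‖ + ‖x i‖ := norm_sub_le y (x i)
        _ < 2^(n+2) := by rw [hpow]; linarith
    have hterm : ∀ i, ENNReal.ofReal ((r' i / 2^n)^s)
        ≤ cE * ENNReal.ofReal ((r i / 2^n)^s') := by
      intro i
      have hu0 : (0:ℝ) < r' i / 2^n := div_pos (lt_of_lt_of_le one_pos (h2' i)) h2n0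
      have hu4 : r' i / 2^n ≤ 4 := by
        rw [div_le_iff₀ h2n0]
        calc r' i ≤ 2^(n+2) := min_le_right _ _
          _ = 4 * 2^n := hpow
      have hsplit : (r' i / 2^n)^s = (r' i / 2^n)^(s-s') * (r' i / 2^n)^s' := by
        rw [← Real.rpow_add hu0]; ring_nf
      have hb1 : (r' i / 2^n)^(s-s') ≤ (4:ℝ)^(s-s') :=
        Real.rpow_le_rpow hu0.le hu4 (by linarith)
      have hb2 : (r' i / 2^n)^s' ≤ (r i / 2^n)^s' :=
        Real.rpow_le_rpow hu0.le (by gcongr; exact min_le_left _ _) hs'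
      calc ENNReal.ofReal ((r' i / 2^n)^s)
          = ENNReal.ofReal ((r' i / 2^n)^(s-s') * (r' i / 2^n)^s') := by rw [← hsplit]
        _ ≤ ENNReal.ofReal ((4:ℝ)^(s-s') * (r i / 2^n)^s') := ENNReal.ofReal_le_ofReal
            (mul_le_mul hb1 hb2 (Real.rpow_nonneg hu0.le _) (Real.rpow_nonneg (by norm_num) _))
        _ = cE * ENNReal.ofReal ((r i / 2^n)^s') := by
            rw [ENNReal.ofReal_mul (Real.rpow_nonneg (by norm_num) _)]
    calc nuT s n E ≤ ∑ i, ENNReal.ofReal ((r' i / 2^n)^s) := nuT_le_of_cover h1 h2' h3'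
      _ ≤ ∑ i, cE * ENNReal.ofReal ((r i / 2^n)^s') := Finset.sum_le_sum (fun i _ => hterm i)
      _ = cE * ∑ i, ENNReal.ofReal ((r i / 2^n)^s') := (Finset.mul_sum _ _ _).symm
  have hdiv : nuT s n E / cE ≤ nuT s' n E :=
    le_sInf (fun u hu => (ENNReal.div_le_iff_le_mul (Or.inl hc0) (Or.inl hcT)).2
      (by rw [mul_comm]; exact hmain u hu))
  calc nuT s n E = cE * (nuT s n E / cE) := (ENNReal.mul_div_cancel hc0 hcT).symm
    _ ≤ cE * nuT s' n E := mul_le_mul_right hdiv _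

end scale

section lattice

lemma abs_coord_le {d : ℕ} (y : EuclideanSpace ℝ (Fin d)) (j : Fin d) : |y j| ≤ ‖y‖ := by
  rw [EuclideanSpace.norm_eq]
  have h1 : ‖y j‖^2 ≤ ∑ i, ‖y i‖^2 :=
    Finset.single_le_sum (f := fun i => ‖y i‖^2) (fun i _ => sq_nonneg _) (Finset.mem_univ j)
  calc |y j| = √(‖y j‖^2) := by rw [Real.sqrt_sq (norm_nonneg _)]; exact (Real.norm_eq_abs _).symm
    _ ≤ √(∑ i, ‖y i‖^2) := Real.sqrt_le_sqrt h1

def latCube (d : ℕ) (z : Fin d → ℤ) : Set (EuclideanSpace ℝ (Fin d)) :=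
  {w | ∀ j, (z j : ℝ) ≤ w j ∧ w j < z j + 1}

lemma mem_latCube {d : ℕ} {z : Fin d → ℤ} {w : EuclideanSpace ℝ (Fin d)} :
    w ∈ latCube d z ↔ ∀ j, (z j : ℝ) ≤ w j ∧ w j < z j + 1 := Iff.rfl

lemma nuT_lattice (d n : ℕ) (E : Set (EuclideanSpace ℝ (Fin d))) :
    nuT ((d:ℝ)+1) n E ≤ ((2*2^n+1 : ℕ) : ℝ≥0∞)^d
      * ENNReal.ofReal ((((d:ℝ)+1) / 2^n)^((d:ℝ)+1)) := by
  classical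
  set M : ℤ := ((2^n : ℕ) : ℤ) with hM
  set F : Finset (Fin d → ℤ) := (Fintype.piFinset (fun _ : Fin d => Finset.Icc (-M) M)).filter
    (fun z => (E ∩ shell (EuclideanSpace ℝ (Fin d)) n ∩ latCube d z).Nonempty) with hF
  set pt : (Fin d → ℤ) → EuclideanSpace ℝ (Fin d) := fun z =>
    if h : (E ∩ shell (EuclideanSpace ℝ (Fin d)) n ∩ latCube d z).Nonempty then h.some else 0 with hpt
  have hptmem : ∀ z ∈ F, pt z ∈ E ∩ shell (EuclideanSpace ℝ (Fin d)) n ∩ latCube d z := by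
    intro z hz
    have h := (Finset.mem_filter.1 hz).2
    simp only [hpt, dif_pos h]
    exact h.some_mem
  set m := F.card with hm
  set x : Fin m → EuclideanSpace ℝ (Fin d) := fun i => pt ((F.equivFin).symm i) with hxdef
  set r : Fin m → ℝ := fun _ => (d:ℝ)+1 with hrdef
  have hx : ∀ i, x i ∈ shell (EuclideanSpace ℝ (Fin d)) n := fun i =>
    (hptmem _ ((F.equivFin).symm i).2).1.2
  have hr : ∀ i, 1 ≤ r i := fun i => by
    simp only [hrdef]
    have : (0:ℝ) ≤ (d:ℝ) := Nat.cast_nonneg d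
    linarith
  have hcov : E ∩ shell (EuclideanSpace ℝ (Fin d)) n ⊆ ⋃ i, Metric.ball (x i) (r i) := by
    intro y hy
    set z : Fin d → ℤ := fun j => ⌊y j⌋ with hz
    have hyc : y ∈ latCube d z := mem_latCube.2 (fun j => ⟨Int.floor_le _, Int.lt_floor_add_one _⟩)
    have hybd : ∀ j, |y j| < 2^n := by
      intro j
      calc |y j| ≤ ‖y‖ := abs_coord_le y j
        _ < 2^n := norm_lt_of_mem_shell hy.2
    have hzI : z ∈ Fintype.piFinset (fun _ : Fin d => Finset.Icc (-M) M) := by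
      rw [Fintype.mem_piFinset]
      intro j
      rw [Finset.mem_Icc]
      have h1 : -(2^n : ℝ) < y j := neg_lt_of_abs_lt (hybd j)
      have h2 : y j < (2^n : ℝ) := lt_of_abs_lt (hybd j)
      have hMR : ((M : ℤ) : ℝ) = (2^n : ℝ) := by rw [hM]; push_cast; ring
      constructor
      · rw [Int.le_floor]
        have hcast : ((-M : ℤ) : ℝ) = -(2^n : ℝ) := by rw [Int.cast_neg, hMR]
        rw [hcast]
        linarith
      · have hlt : (z j : ℝ) < ((M : ℤ) : ℝ) := by
          rw [hMR]
          calc ((z j : ℤ) : ℝ) ≤ y j := Int.floor_le _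
            _ < 2^n := h2
        exact (Int.cast_lt.1 hlt).le
    have hzF : z ∈ F := Finset.mem_filter.2 ⟨hzI, ⟨y, ⟨hy, hyc⟩⟩⟩
    set i : Fin m := F.equivFin ⟨z, hzF⟩ with hi
    refine mem_iUnion.2 ⟨i, ?_⟩
    have hxi : x i = pt z := by
      simp only [hxdef, hi, Equiv.symm_apply_apply]
    have hc : pt z ∈ latCube d z := (hptmem z hzF).2
    rw [mem_ball, hxi]
    have hdj : ∀ j : Fin d, dist (y j) (pt z j) ^ 2 ≤ 1 := by
      intro j
      have h1 := (mem_latCube.1 hyc j).1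
      have h2 := (mem_latCube.1 hyc j).2
      have h3 := (mem_latCube.1 hc j).1
      have h4 := (mem_latCube.1 hc j).2
      rw [Real.dist_eq]
      have habs : |y j - pt z j| ≤ 1 := abs_le.2 ⟨by linarith, by linarith⟩
      nlinarith [abs_nonneg (y j - pt z j), sq_abs (y j - pt z j)]
    calc dist y (pt z) = √(∑ j, dist (y j) (pt z j) ^ 2) := EuclideanSpace.dist_eq y (pt z)
      _ ≤ √(d : ℝ) := by
          apply Real.sqrt_le_sqrt
          calc (∑ j, dist (y j) (pt z j) ^ 2) ≤ ∑ _j : Fin d, (1:ℝ) :=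
              Finset.sum_le_sum (fun j _ => hdj j)
            _ = (d : ℝ) := by simp
      _ < (d:ℝ) + 1 := by
          rw [show ((d:ℝ)+1) = ((d:ℝ)+1) from rfl]
          have : (d:ℝ) < ((d:ℝ)+1)^2 := by nlinarith [Nat.cast_nonneg (α := ℝ) d]
          exact (Real.sqrt_lt' (by positivity)).2 this
  have hcost := nuT_le_of_cover (s := (d:ℝ)+1) hx hr hcov
  have hsum : (∑ i : Fin m, ENNReal.ofReal ((r i / 2^n)^((d:ℝ)+1)))
      = (m : ℝ≥0∞) * ENNReal.ofReal ((((d:ℝ)+1) / 2^n)^((d:ℝ)+1)) := by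
    simp only [hrdef]
    rw [Finset.sum_const, Finset.card_univ, Fintype.card_fin, nsmul_eq_mul]
  have hcard : (m : ℝ≥0∞) ≤ ((2*2^n+1 : ℕ) : ℝ≥0∞)^d := by
    have h1 : m ≤ (2*2^n+1 : ℕ)^d := by
      rw [hm]
      calc F.card ≤ (Fintype.piFinset (fun _ : Fin d => Finset.Icc (-M) M)).card :=
          Finset.card_filter_le _ _
        _ = ∏ _j : Fin d, (Finset.Icc (-M) M).card := Fintype.card_piFinset _
        _ = (2*2^n+1 : ℕ)^d := by
            rw [Finset.prod_const, Finset.card_univ, Fintype.card_fin]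
            congr 1
            rw [Int.card_Icc]
            rw [hM]
            omega
    calc (m : ℝ≥0∞) ≤ ((2*2^n+1 : ℕ)^d : ℕ) := Nat.cast_le.2 h1
      _ = ((2*2^n+1 : ℕ) : ℝ≥0∞)^d := by push_cast; ring
  calc nuT ((d:ℝ)+1) n E ≤ ∑ i, ENNReal.ofReal ((r i / 2^n)^((d:ℝ)+1)) := hcost
    _ = (m : ℝ≥0∞) * ENNReal.ofReal ((((d:ℝ)+1) / 2^n)^((d:ℝ)+1)) := hsum
    _ ≤ ((2*2^n+1 : ℕ) : ℝ≥0∞)^d * ENNReal.ofReal ((((d:ℝ)+1) / 2^n)^((d:ℝ)+1)) :=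
        mul_le_mul_left hcard _

end lattice

section tsumfin

lemma tsum_nuT_lt_top (d : ℕ) (E : Set (EuclideanSpace ℝ (Fin d))) :
    ∑' n, nuT ((d:ℝ)+1) n E < ⊤ := by
  set A : ℝ≥0∞ := ENNReal.ofReal (((d:ℝ)+1)^(d+1)) with hA
  set C : ℝ≥0∞ := (4:ℝ≥0∞)^d * A with hC
  have hAtop : A ≠ ⊤ := ENNReal.ofReal_ne_top
  have hbound : ∀ n, nuT ((d:ℝ)+1) n E ≤ C * (2⁻¹:ℝ≥0∞)^n := by
    intro n
    have h2n0 : (0:ℝ) < 2^n := by positivity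
    have hd0 : (0:ℝ) ≤ (d:ℝ)+1 := by positivity
    -- card bound
    have hcard : ((2*2^n+1 : ℕ) : ℝ≥0∞)^d ≤ (4:ℝ≥0∞)^d * (2:ℝ≥0∞)^(n*d) := by
      have h1 : ((2*2^n+1 : ℕ) : ℝ≥0∞) ≤ ((4*2^n : ℕ) : ℝ≥0∞) := by
        apply Nat.cast_le.2
        have : (1:ℕ) ≤ 2^n := Nat.one_le_two_pow
        omega
      calc ((2*2^n+1 : ℕ) : ℝ≥0∞)^d ≤ ((4*2^n : ℕ) : ℝ≥0∞)^d := pow_le_pow_left' h1 d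
        _ = (4:ℝ≥0∞)^d * (2:ℝ≥0∞)^(n*d) := by
            push_cast
            rw [mul_pow, ← pow_mul]
    -- ofReal piece
    have hof : ENNReal.ofReal ((((d:ℝ)+1) / 2^n)^((d:ℝ)+1))
        = A / (2:ℝ≥0∞)^(n*(d+1)) := by
      have hexp : (((d:ℝ)+1) / 2^n)^((d:ℝ)+1) = (((d:ℝ)+1) / 2^n)^((d+1 : ℕ) : ℝ) := by
        congr 1
        push_cast
        ring
      rw [hexp, Real.rpow_natCast, div_pow,
        ENNReal.ofReal_div_of_pos (by positivity), hA]
      congr 1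
      rw [← pow_mul, ENNReal.ofReal_pow (by norm_num : (0:ℝ) ≤ 2)]
      simp
    have hsplit : (2:ℝ≥0∞)^(n*(d+1)) = (2:ℝ≥0∞)^(n*d) * (2:ℝ≥0∞)^n := by
      rw [mul_add, mul_one, pow_add]
    have h2nd0 : ((2:ℝ≥0∞)^(n*d)) ≠ 0 := by positivity
    have h2ndT : ((2:ℝ≥0∞)^(n*d)) ≠ ⊤ := by
      exact ENNReal.pow_ne_top (by norm_num)
    calc nuT ((d:ℝ)+1) n E
        ≤ ((2*2^n+1 : ℕ) : ℝ≥0∞)^d * ENNReal.ofReal ((((d:ℝ)+1) / 2^n)^((d:ℝ)+1)) :=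
          nuT_lattice d n E
      _ ≤ ((4:ℝ≥0∞)^d * (2:ℝ≥0∞)^(n*d)) * (A / (2:ℝ≥0∞)^(n*(d+1))) := by
          rw [hof]; exact mul_le_mul_left hcard _
      _ = C * (2⁻¹:ℝ≥0∞)^n := by
          have hk : (2:ℝ≥0∞)^(n*d) * (2⁻¹:ℝ≥0∞)^(n*d) = 1 := by
            rw [← mul_pow, ENNReal.mul_inv_cancel (by norm_num) (by norm_num), one_pow]
          calc ((4:ℝ≥0∞)^d * (2:ℝ≥0∞)^(n*d)) * (A / (2:ℝ≥0∞)^(n*(d+1)))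
              = ((4:ℝ≥0∞)^d * (2:ℝ≥0∞)^(n*d)) * ((2⁻¹:ℝ≥0∞)^(n*(d+1)) * A) := by
                rw [ENNReal.div_eq_inv_mul, ENNReal.inv_pow]
            _ = ((4:ℝ≥0∞)^d * A) * (((2:ℝ≥0∞)^(n*d) * (2⁻¹:ℝ≥0∞)^(n*d)) * (2⁻¹:ℝ≥0∞)^n) := by
                rw [show n*(d+1) = n*d + n from by ring, pow_add]
                ring
            _ = C * (2⁻¹:ℝ≥0∞)^n := by rw [hk, one_mul, hC]
  have hgeom : (∑' n : ℕ, (2⁻¹:ℝ≥0∞)^n) ≠ ⊤ := by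
    rw [ENNReal.tsum_geometric]
    refine ENNReal.inv_ne_top.2 ?_
    have : (2:ℝ≥0∞)⁻¹ < 1 := ENNReal.inv_lt_one.2 one_lt_two
    exact (tsub_pos_iff_lt.2 this).ne'
  have hCtop : C ≠ ⊤ := ENNReal.mul_ne_top (ENNReal.pow_ne_top (by norm_num)) hAtop
  calc (∑' n, nuT ((d:ℝ)+1) n E) ≤ ∑' n, C * (2⁻¹:ℝ≥0∞)^n := ENNReal.tsum_le_tsum hbound
    _ = C * ∑' n, (2⁻¹:ℝ≥0∞)^n := ENNReal.tsum_mul_left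
    _ < ⊤ := lt_top_iff_ne_top.2 (ENNReal.mul_ne_top hCtop hgeom)

end tsumfin

/-- Potential-theoretic lower bound: a Radon measure of infinite mass on `E` with
`Σₙ 2^{ns} I_s(μ|_{Sₙ}) < ∞` forces `ν̃^s(E) = ∞` and `Dim_H(E) ≥ s`. -/
theorem stmt13 (d : ℕ) (E : Set (EuclideanSpace ℝ (Fin d))) (s : ℝ) (hs : 0 ≤ s)
    (μ : Measure (EuclideanSpace ℝ (Fin d))) [IsLocallyFiniteMeasure μ]
    (hμE : μ E = ⊤)
    (hI : ∑' n : ℕ, (2 : ℝ≥0∞) ^ ((n : ℝ) * s)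
        * energy s (μ.restrict (shell (EuclideanSpace ℝ (Fin d)) n)) < ⊤) :
    (∑' n, nuT s n E = ⊤) ∧ s ≤ macroDim E := by
  have h1 : ∑' n, nuT s n E = ⊤ := part1 E s hs μ hμE hI
  refine ⟨h1, ?_⟩
  have hne : { s' : ℝ | 0 ≤ s' ∧ ∑' n, nuT s' n E < ⊤ }.Nonempty :=
    ⟨(d:ℝ)+1, by positivity, tsum_nuT_lt_top d E⟩
  unfold macroDim
  refine le_csInf hne ?_
  rintro s' ⟨hs'0, hs'fin⟩
  by_contra hcon
  push_neg at hcon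
  have hscale : ∀ n, nuT s n E ≤ ENNReal.ofReal ((4:ℝ)^(s-s')) * nuT s' n E :=
    fun n => nuT_le_scale s s' hs'0 (le_of_lt hcon) n E
  have hle : (∑' n, nuT s n E) ≤ ENNReal.ofReal ((4:ℝ)^(s-s')) * ∑' n, nuT s' n E := by
    calc (∑' n, nuT s n E) ≤ ∑' n, ENNReal.ofReal ((4:ℝ)^(s-s')) * nuT s' n E :=
        ENNReal.tsum_le_tsum hscale
      _ = _ := ENNReal.tsum_mul_left
  rw [h1] at hle
  exact (ENNReal.mul_ne_top ENNReal.ofReal_ne_top hs'fin.ne) (top_le_iff.1 hle)
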